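/- For the polynomials C_n defined by C_0(τ) = τ²/3 − 1/3 and the recurrence C_n + τ C'_n − C''_n = τ(τ²−2)C_{n−1} − (2τ²−1)C'_{n−1} + τ C''_{n−1}, the degree of C_n is exactly 3n + 2, with leading coefficient 1/(3^{n+1}(n+1)!). -/

import Mathlib

open Polynomial

private lemma Lcoeff (w : Polynomial ℚ) (k : ℕ) :
    (w + X * derivative w - derivative (derivative w)).coeff k
      = (k + 1 : ℚ) * w.coeff k - (k + 1) * (k + 2) * w.coeff (k + 2) := by
  cases k with
  | zero =>
      simp only [coeff_sub, coeff_add, mul_coeff_zero, coeff_X_zero, coeff_derivative]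
      ring
  | succ k =>
      simp [coeff_derivative, coeff_X_mul]
      ring

private lemma L_spec (w q : Polynomial ℚ) (hq : q ≠ 0)
    (h : w + X * derivative w - derivative (derivative w) = q) :
    w.natDegree = q.natDegree ∧
      q.leadingCoeff = (w.natDegree + 1 : ℚ) * w.leadingCoeff := by
  have hw : w ≠ 0 := by
    rintro rfl; simp at h; exact hq h.symm
  set d := w.natDegree with hd
  have key : ∀ k : ℕ, q.coeff k = (k + 1 : ℚ) * w.coeff k - (k + 1) * (k + 2) * w.coeff (k + 2) := by
    intro k; rw [← h, Lcoeff]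
  have hz : w.coeff (d + 2) = 0 := coeff_eq_zero_of_natDegree_lt (by omega)
  have hcd : q.coeff d = (d + 1 : ℚ) * w.coeff d := by
    rw [key, hz]
    ring
  have hne : q.coeff d ≠ 0 := by
    rw [hcd]
    exact mul_ne_zero (by positivity) (leadingCoeff_ne_zero.mpr hw)
  have h1 : d ≤ q.natDegree := le_natDegree_of_ne_zero hne
  have h2 : q.natDegree ≤ d := by
    by_contra hlt
    push_neg at hlt
    have hz1 : w.coeff q.natDegree = 0 := coeff_eq_zero_of_natDegree_lt (by omega)
    have hz2 : w.coeff (q.natDegree + 2) = 0 := coeff_eq_zero_of_natDegree_lt (by omega)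
    have : q.coeff q.natDegree = 0 := by
      rw [key, hz1, hz2]
      ring
    exact leadingCoeff_ne_zero.mpr hq this
  have hdq : d = q.natDegree := le_antisymm h1 h2
  refine ⟨hdq, ?_⟩
  rw [leadingCoeff, ← hdq, hcd, leadingCoeff]

theorem C_degree_leadingCoeff (Cs : ℕ → Polynomial ℚ)
    (h0 : Cs 0 = C (1 / 3) * X ^ 2 - C (1 / 3))
    (hrec : ∀ n : ℕ,
      Cs (n + 1) + X * derivative (Cs (n + 1)) - derivative (derivative (Cs (n + 1))) =
        X * (X ^ 2 - C 2) * Cs n - (C 2 * X ^ 2 - 1) * derivative (Cs n) +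
          X * derivative (derivative (Cs n))) :
    ∀ n : ℕ, (Cs n).natDegree = 3 * n + 2 ∧
      (Cs n).leadingCoeff = 1 / (3 ^ (n + 1) * (n + 1).factorial : ℚ) := by
  intro n
  induction n with
  | zero =>
      constructor
      · rw [h0]; compute_degree!
      · have hdeg : (Cs 0).natDegree = 2 := by rw [h0]; compute_degree!
        rw [leadingCoeff, hdeg, h0]
        simp
  | succ n ih =>
      obtain ⟨hdeg, hlc⟩ := ih
      set p := Cs n with hp
      set m := p.natDegree with hm
      have hc0 : p.leadingCoeff ≠ 0 := by
        rw [hlc]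
        positivity
      have hpne : p ≠ 0 := leadingCoeff_ne_zero.mp hc0
      -- the RHS
      set a := X * (X ^ 2 - C 2) * p with hA
      set b := (C 2 * X ^ 2 - 1) * derivative p with hB
      set e := X * derivative (derivative p) with hE
      have hXdeg : (X * (X ^ 2 - C 2) : Polynomial ℚ).degree = 3 := by
        compute_degree!
      have hXlc : (X * (X ^ 2 - C 2) : Polynomial ℚ).leadingCoeff = 1 := by
        have : (X * (X ^ 2 - C 2) : Polynomial ℚ).natDegree = 3 := by compute_degree!
        rw [leadingCoeff, this]
        compute_degree!
      have hXne : (X * (X ^ 2 - C 2) : Polynomial ℚ) ≠ 0 := by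
        intro h'; rw [h'] at hXdeg; simp at hXdeg
      have ha : a.degree = ((m + 3 : ℕ) : WithBot ℕ) := by
        rw [hA, degree_mul, hXdeg, degree_eq_natDegree hpne, ← hm]
        push_cast; ring
      have halc : a.leadingCoeff = p.leadingCoeff := by
        rw [hA, leadingCoeff_mul, hXlc, one_mul]
      have hmn : m = 3 * n + 2 := hdeg
      have hb : b.degree ≤ ((m + 1 : ℕ) : WithBot ℕ) := by
        refine le_trans (degree_mul_le _ _) ?_
        have h1 : (C 2 * X ^ 2 - 1 : Polynomial ℚ).degree ≤ 2 := by compute_degree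
        have h2 : (derivative p).degree ≤ ((m - 1 : ℕ) : WithBot ℕ) := by
          refine le_trans degree_le_natDegree ?_
          exact_mod_cast natDegree_derivative_le p
        calc (C 2 * X ^ 2 - 1 : Polynomial ℚ).degree + (derivative p).degree
            ≤ (2 : WithBot ℕ) + ((m - 1 : ℕ) : WithBot ℕ) := add_le_add h1 h2
          _ = ((m + 1 : ℕ) : WithBot ℕ) := by
              rw [show ((2 : WithBot ℕ)) = ((2 : ℕ) : WithBot ℕ) by rfl, ← Nat.cast_add]
              congr 1; omega
      have he : e.degree ≤ ((m - 1 : ℕ) : WithBot ℕ) := by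
        refine le_trans (degree_mul_le _ _) ?_
        have h1 : (X : Polynomial ℚ).degree = 1 := degree_X
        have hnd : (derivative (derivative p)).natDegree ≤ m - 2 := by
          have e1 := natDegree_derivative_le (derivative p)
          have e2 := natDegree_derivative_le p
          omega
        have h2 : (derivative (derivative p)).degree ≤ ((m - 2 : ℕ) : WithBot ℕ) :=
          le_trans degree_le_natDegree (by exact_mod_cast hnd)
        rw [h1]
        calc (1 : WithBot ℕ) + (derivative (derivative p)).degree
            ≤ (1 : WithBot ℕ) + ((m - 2 : ℕ) : WithBot ℕ) := by
              exact add_le_add le_rfl h2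
          _ ≤ ((m - 1 : ℕ) : WithBot ℕ) := by
              rw [show ((1 : WithBot ℕ)) = ((1 : ℕ) : WithBot ℕ) by rfl, ← Nat.cast_add]
              exact_mod_cast (by omega : 1 + (m - 2) ≤ m - 1)
      have hsub : (e - b).degree < a.degree := by
        rw [ha]
        refine lt_of_le_of_lt (degree_sub_le _ _) ?_
        refine max_lt (lt_of_le_of_lt he ?_) (lt_of_le_of_lt hb ?_)
        · exact_mod_cast (by omega : m - 1 < m + 3)
        · exact_mod_cast (by omega : m + 1 < m + 3)
      have hreq : a - b + e = a + (e - b) := by ring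
      have hRdeg : (a - b + e).degree = ((m + 3 : ℕ) : WithBot ℕ) := by
        rw [hreq, ← ha]
        exact degree_add_eq_left_of_degree_lt hsub
      have hRlc : (a - b + e).leadingCoeff = p.leadingCoeff := by
        rw [hreq, ← halc]
        exact leadingCoeff_add_of_degree_lt' hsub
      have hRne : (a - b + e) ≠ 0 :=
        leadingCoeff_ne_zero.mp (by rw [hRlc]; exact hc0)
      have hRnat : (a - b + e).natDegree = m + 3 := natDegree_eq_of_degree_eq_some hRdeg
      obtain ⟨hd1, hl1⟩ := L_spec (Cs (n + 1)) (a - b + e) hRne (hrec n)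
      have hdeg' : (Cs (n + 1)).natDegree = 3 * (n + 1) + 2 := by
        rw [hd1, hRnat]; omega
      refine ⟨hdeg', ?_⟩
      have hl2 : p.leadingCoeff = ((Cs (n + 1)).natDegree + 1 : ℚ) * (Cs (n + 1)).leadingCoeff := by
        rw [← hl1, hRlc]
      rw [hlc, hdeg'] at hl2
      have hfac : ((n + 1 + 1).factorial : ℚ) = (n + 2) * (n + 1).factorial := by
        rw [Nat.factorial_succ]; push_cast; ring
      have hne1 : ((3 : ℚ) ^ (n + 1) * (n + 1).factorial) ≠ 0 := by positivity
      have hne2 : ((3 * (n + 1) + 2 : ℕ) : ℚ) + 1 ≠ 0 := by positivity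
      field_simp [hfac] at hl2 ⊢
      rw [hfac]; push_cast at hl2 ⊢; linear_combination -hl2
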